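/- Let H be a cocommutative Hopf algebra over k. For every n and every h₁,…,hₙ ∈ H, Shₙ(ρₙ(h₁⊗⋯⊗hₙ)) = Σ_{p+q=n} Σ_σ sign(σ) (h_{σ(1)}⊗⋯⊗h_{σ(p)}) ⊗ (h_{σ(p+1)}⊗⋯⊗h_{σ(n)}), where σ runs over all (p,q)-shuffles; that is, the composite of the diagonal map ρₙ with the shuffle map equals the unshuffle (deconcatenation-by-shuffles) coproduct. -/

import Mathlib

/-!
Statement 3: Let `H` be a cocommutative Hopf algebra over a field `k` of characteristic
zero. For every `n` and all `h₁,…,hₙ ∈ H`,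
`Shₙ(ρₙ(h₁⊗⋯⊗hₙ)) = Σ_{p+q=n} Σ_σ sign(σ) (h_{σ(1)}⊗⋯⊗h_{σ(p)}) ⊗ (h_{σ(p+1)}⊗⋯⊗h_{σ(n)})`,
where `σ` runs over all `(p,q)`-shuffles, `ρₙ(h₁⊗⋯⊗hₙ) = (h₁⁽¹⁾⊗⋯⊗hₙ⁽¹⁾) ⊗ (h₁⁽²⁾⊗⋯⊗hₙ⁽²⁾)`
and `Sh = ⊕_{p+q=n} sh_{p,q}` is the shuffle map.  We state the `(p,q)`-component of
this identity for each `p + q = n`; `(p,q)`-shuffles are encoded by the `p`-element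
subsets `S` of `Fin n` (the set `σ{1,…,p}`), with `Finset.orderIsoOfFin` enumerating
`S` and `Sᶜ` in increasing order.
-/

open TensorProduct

noncomputable section

namespace HopfCyclicStmt

variable (k : Type) [Field k]

/-! ### Iterated tensor powers and basic operations -/

section TP
variable (A : Type) [Ring A] [Algebra k A]

/-- Bundled iterated tensor powers of `A` over `k` (right-nested). -/
def TPobj : ℕ → ModuleCat k
  | 0 => ModuleCat.of k k
  | n + 1 => ModuleCat.of k (A ⊗[k] (TPobj n))

/-- `TP k A n` is the `n`-fold tensor power `A ⊗ ⋯ ⊗ A` of `A` over `k`,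
with `TP k A 0 = k` and `TP k A (n+1) = A ⊗ TP k A n`. -/
def TP (n : ℕ) : Type := TPobj k A n

instance (n : ℕ) : AddCommGroup (TP k A n) := inferInstanceAs (AddCommGroup (TPobj k A n))
instance (n : ℕ) : Module k (TP k A n) := inferInstanceAs (Module k (TPobj k A n))

/-- The pure tensor `h₁ ⊗ ⋯ ⊗ hₙ` as an element of `TP k A n`. -/
def tp : ∀ n, (Fin n → A) → TP k A n
  | 0, _ => (1 : k)
  | n + 1, f => f 0 ⊗ₜ[k] tp n (fun i => f i.succ)

/-- Transport along an equality of lengths. -/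
def castTP {m n : ℕ} (h : m = n) : TP k A m ≃ₗ[k] TP k A n :=
  h ▸ LinearEquiv.refl k (TP k A m)

/-- Multiply the `i`-th and `(i+1)`-st tensor factors (`0`-indexed). -/
def mulAt : ∀ (n : ℕ), Fin (n + 1) → (TP k A (n + 2) →ₗ[k] TP k A (n + 1))
  | n, ⟨0, _⟩ =>
      (LinearMap.rTensor (TP k A n) (LinearMap.mul' k A)
        ∘ₗ (TensorProduct.assoc k A A (TP k A n)).symm.toLinearMap :
          A ⊗[k] (A ⊗[k] TP k A n) →ₗ[k] A ⊗[k] TP k A n)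
  | n + 1, ⟨j + 1, h⟩ => LinearMap.lTensor A (mulAt n ⟨j, by omega⟩)
  | 0, ⟨j + 1, h⟩ => absurd h (by omega)

/-- Apply the counit `counitA` to the `i`-th tensor factor (`0`-indexed). -/
def dropAt (counitA : A →ₗ[k] k) : ∀ (n : ℕ), Fin (n + 1) → (TP k A (n + 1) →ₗ[k] TP k A n)
  | n, ⟨0, _⟩ =>
      (TensorProduct.lid k (TP k A n)).toLinearMap ∘ₗ LinearMap.rTensor (TP k A n) counitA
  | n + 1, ⟨j + 1, h⟩ => LinearMap.lTensor A (dropAt counitA n ⟨j, by omega⟩)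
  | 0, ⟨j + 1, h⟩ => absurd h (by omega)

/-- Apply the comultiplication `comulA` to the `i`-th tensor factor (`0`-indexed). -/
def comulAt (comulA : A →ₗ[k] A ⊗[k] A) : ∀ (n : ℕ), Fin n → (TP k A n →ₗ[k] TP k A (n + 1))
  | n + 1, ⟨0, _⟩ =>
      (TensorProduct.assoc k A A (TP k A n)).toLinearMap ∘ₗ LinearMap.rTensor (TP k A n) comulA
  | n + 2, ⟨j + 1, h⟩ => LinearMap.lTensor A (comulAt comulA (n + 1) ⟨j, by omega⟩)
  | 1, ⟨j + 1, h⟩ => absurd h (by omega)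
  | 0, i => absurd i.2 (by omega)

/-- Prepend a `1` in front: `x ↦ 1 ⊗ x`. -/
def cons1 (n : ℕ) : TP k A n →ₗ[k] TP k A (n + 1) := TensorProduct.mk k A (TP k A n) 1

/-- Append a tensor factor at the end. -/
def snoc : ∀ (n : ℕ), TP k A n ⊗[k] A →ₗ[k] TP k A (n + 1)
  | 0 => (TensorProduct.comm k k A).toLinearMap
  | n + 1 =>
      LinearMap.lTensor A (snoc n) ∘ₗ (TensorProduct.assoc k A (TP k A n) A).toLinearMap

/-- Append a `1` at the end: `x ↦ x ⊗ 1`. -/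
def snoc1 (n : ℕ) : TP k A n →ₗ[k] TP k A (n + 1) :=
  snoc k A n ∘ₗ (TensorProduct.mk k (TP k A n) A).flip 1

/-- Insert a `1` right after the `i`-th tensor factor. -/
def insertOneAt : ∀ (n : ℕ), Fin (n + 1) → (TP k A (n + 1) →ₗ[k] TP k A (n + 2))
  | n, ⟨0, _⟩ => LinearMap.lTensor A (cons1 k A n)
  | n + 1, ⟨j + 1, h⟩ => LinearMap.lTensor A (insertOneAt n ⟨j, by omega⟩)
  | 0, ⟨j + 1, h⟩ => absurd h (by omega)

/-- Pull the last tensor factor to the front. -/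
def lastSplit : ∀ (n : ℕ), TP k A (n + 1) →ₗ[k] A ⊗[k] TP k A n
  | 0 => LinearMap.id
  | n + 1 =>
      (TensorProduct.leftComm k A A (TP k A n)).toLinearMap
        ∘ₗ LinearMap.lTensor A (lastSplit n)

/-- Apply the counit to every factor. -/
def epsAll (counitA : A →ₗ[k] k) : ∀ (n : ℕ), TP k A n →ₗ[k] k
  | 0 => LinearMap.id
  | n + 1 =>
      (TensorProduct.lid k k).toLinearMap
        ∘ₗ TensorProduct.map counitA (epsAll counitA n)

/-- The diagonal (left) action of `A` on `TP k A (n+1)` with respect to the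
comultiplication `comulA`: `h · (h₀ ⊗ ⋯ ⊗ hₙ) = h⁽¹⁾h₀ ⊗ ⋯ ⊗ h⁽ⁿ⁺¹⁾hₙ`. -/
def diagTP (comulA : A →ₗ[k] A ⊗[k] A) : ∀ (n : ℕ), A ⊗[k] TP k A (n + 1) →ₗ[k] TP k A (n + 1)
  | 0 =>
      (LinearMap.rTensor k (LinearMap.mul' k A)
        ∘ₗ (TensorProduct.assoc k A A k).symm.toLinearMap :
          A ⊗[k] (A ⊗[k] k) →ₗ[k] A ⊗[k] k)
  | n + 1 =>
      TensorProduct.map (LinearMap.mul' k A) (diagTP comulA n)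
        ∘ₗ (TensorProduct.tensorTensorTensorComm k A A A (TP k A (n + 1))).toLinearMap
        ∘ₗ LinearMap.rTensor (A ⊗[k] TP k A (n + 1)) comulA

/-- The diagonal right coaction of `A` on `TP k A n`:
`h₀ ⊗ ⋯ ⊗ hₙ ↦ (h₀⁽¹⁾ ⊗ ⋯ ⊗ hₙ⁽¹⁾) ⊗ (h₀⁽²⁾ ⋯ hₙ⁽²⁾)`. -/
def codiagTP (comulA : A →ₗ[k] A ⊗[k] A) : ∀ (n : ℕ), TP k A n →ₗ[k] TP k A n ⊗[k] A
  | 0 => (TensorProduct.mk k (TP k A 0) A).flip 1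
  | n + 1 =>
      (LinearMap.lTensor (A ⊗[k] TP k A n) (LinearMap.mul' k A)
        ∘ₗ (TensorProduct.tensorTensorTensorComm k A A (TP k A n) A).toLinearMap
        ∘ₗ TensorProduct.map comulA (codiagTP comulA n) :
          TP k A (n + 1) →ₗ[k] (A ⊗[k] TP k A n) ⊗[k] A)

end TP

/-! ### Rearrangement of tensor powers of tensor products, and the diagonal -/

section Diag
variable (A B : Type) [Ring A] [Algebra k A] [Ring B] [Algebra k B]

/-- The rearrangement `(a₀⊗b₀) ⊗ ⋯ ⊗ (aₙ⊗bₙ) ↦ (a₀⊗⋯⊗aₙ) ⊗ (b₀⊗⋯⊗bₙ)`. -/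
def OmegaTP : ∀ (n : ℕ), TP k (A ⊗[k] B) n ≃ₗ[k] TP k A n ⊗[k] TP k B n
  | 0 => (TensorProduct.lid k k).symm
  | n + 1 =>
      (TensorProduct.congr (LinearEquiv.refl k (A ⊗[k] B)) (OmegaTP n)) ≪≫ₗ
        TensorProduct.tensorTensorTensorComm k A B (TP k A n) (TP k B n)

/-- Apply the comultiplication to every tensor factor:
`h₁ ⊗ ⋯ ⊗ hₙ ↦ (h₁⁽¹⁾⊗h₁⁽²⁾) ⊗ ⋯ ⊗ (hₙ⁽¹⁾⊗hₙ⁽²⁾)` in `TP k (A ⊗ A) n`. -/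
def TPdiag (comulA : A →ₗ[k] A ⊗[k] A) : ∀ (n : ℕ), TP k A n →ₗ[k] TP k (A ⊗[k] A) n
  | 0 => LinearMap.id
  | n + 1 => TensorProduct.map comulA (TPdiag comulA n)

end Diag

/-! ### Shuffles -/

section Shuffle
variable (A : Type) [Ring A] [Algebra k A]

/-- The subset of `Fin n` obtained from a subset of `Fin (n+1)` by removing `0`
and shifting down. -/
def tailSet {n : ℕ} (S : Finset (Fin (n + 1))) : Finset (Fin n) :=
  Finset.univ.filter (fun i : Fin n => i.succ ∈ S)

lemma tailSet_card_mem {n : ℕ} (S : Finset (Fin (n + 1))) (h : (0 : Fin (n + 1)) ∈ S) :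
    (tailSet S).card + 1 = S.card := by
  classical
  have h1 : S.card = ∑ x : Fin (n + 1), if x ∈ S then 1 else 0 := by
    rw [← Finset.card_filter]
    congr 1
    simp [Finset.filter_mem_eq_inter]
  rw [h1, Fin.sum_univ_succ, if_pos h]
  have h2 : (tailSet S).card = ∑ i : Fin n, if i.succ ∈ S then 1 else 0 := by
    rw [tailSet, Finset.card_filter]
  omega

lemma tailSet_card_not_mem {n : ℕ} (S : Finset (Fin (n + 1))) (h : (0 : Fin (n + 1)) ∉ S) :
    (tailSet S).card = S.card := by
  classical
  have h1 : S.card = ∑ x : Fin (n + 1), if x ∈ S then 1 else 0 := by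
    rw [← Finset.card_filter]
    congr 1
    simp [Finset.filter_mem_eq_inter]
  rw [h1, Fin.sum_univ_succ, if_neg h]
  have h2 : (tailSet S).card = ∑ i : Fin n, if i.succ ∈ S then 1 else 0 := by
    rw [tailSet, Finset.card_filter]
  omega

lemma tailSet_compl {n : ℕ} (S : Finset (Fin (n + 1))) :
    (tailSet S)ᶜ = tailSet Sᶜ := by
  classical
  ext i
  simp [tailSet]

lemma card_compl_eq {n p q : ℕ} (hpq : p + q = n) (S : Finset (Fin n)) (hS : S.card = p) :
    Sᶜ.card = q := by
  have h1 := Finset.card_compl S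
  have h2 := Finset.card_le_univ S
  simp only [Fintype.card_fin] at h1
  simp only [Fintype.card_fin] at h2
  omega

set_option maxHeartbeats 2000000 in
/-- Split a tensor power according to a subset `S` of the positions: the factors in
positions belonging to `S` are collected (in order) into the first output, those in the
complementary positions into the second output. -/
def splitTP : ∀ (n : ℕ) (S : Finset (Fin n)), TP k A n →ₗ[k] TP k A S.card ⊗[k] TP k A Sᶜ.card
  | 0, S =>
      (TensorProduct.congr
          (castTP k A (show 0 = S.card by
            rw [Finset.eq_empty_of_isEmpty S, Finset.card_empty]))
          (castTP k A (show 0 = Sᶜ.card by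
            rw [Finset.eq_empty_of_isEmpty Sᶜ, Finset.card_empty]))).toLinearMap
        ∘ₗ (TensorProduct.lid k (TP k A 0)).symm.toLinearMap
  | n + 1, S =>
      if h0 : (0 : Fin (n + 1)) ∈ S then
        ((TensorProduct.congr
            (castTP k A (by simpa using tailSet_card_mem S h0) :
                TP k A ((tailSet S).card + 1) ≃ₗ[k] TP k A S.card)
            (castTP k A (by
              rw [tailSet_compl]
              exact tailSet_card_not_mem Sᶜ (by simpa using h0)))).toLinearMap
          ∘ₗ (TensorProduct.assoc k A (TP k A (tailSet S).card)
                (TP k A (tailSet S)ᶜ.card)).symm.toLinearMap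
          ∘ₗ LinearMap.lTensor A (splitTP n (tailSet S)) :
            A ⊗[k] TP k A n →ₗ[k] TP k A S.card ⊗[k] TP k A Sᶜ.card)
      else
        ((TensorProduct.congr
            (castTP k A (tailSet_card_not_mem S h0))
            (castTP k A (by
              rw [tailSet_compl]
              simpa using tailSet_card_mem Sᶜ (by simpa using h0)) :
                TP k A ((tailSet S)ᶜ.card + 1) ≃ₗ[k] TP k A Sᶜ.card)).toLinearMap
          ∘ₗ (TensorProduct.leftComm k A (TP k A (tailSet S).card)
                (TP k A (tailSet S)ᶜ.card)).toLinearMap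
          ∘ₗ LinearMap.lTensor A (splitTP n (tailSet S)) :
            A ⊗[k] TP k A n →ₗ[k] TP k A S.card ⊗[k] TP k A Sᶜ.card)

/-- The sign of the `(p,q)`-shuffle associated to a subset `S ⊆ {0,…,n−1}` of
cardinality `p` (the shuffle placing the positions in `S` first, in order): the parity
of the number of pairs `(a, b) ∈ S × Sᶜ` with `b < a`. -/
def shuffleSign {n : ℕ} (S : Finset (Fin n)) : ℤ :=
  (-1) ^ (∑ a ∈ S, (Sᶜ.filter (· < a)).card)

/-- Keep the tensor factors in positions belonging to `S` (in order) and apply the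
counit to all the other factors. -/
def keepTP (counitA : A →ₗ[k] k) (n : ℕ) (S : Finset (Fin n)) :
    TP k A n →ₗ[k] TP k A S.card :=
  (TensorProduct.rid k (TP k A S.card)).toLinearMap
    ∘ₗ LinearMap.lTensor (TP k A S.card) (epsAll k A counitA Sᶜ.card)
    ∘ₗ splitTP k A n S

/-- The component `∪_{p,q} : A^{⊗n} → A^{⊗p} ⊗ A^{⊗q}` of the unshuffle coproduct:
`∪_{p,q}(h₁⊗⋯⊗hₙ) = Σ_σ sign(σ) (h_{σ(1)}⊗⋯⊗h_{σ(p)}) ⊗ (h_{σ(p+1)}⊗⋯⊗h_{σ(n)})`,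
where `σ` runs over all `(p,q)`-shuffles. -/
def cupTP (n p q : ℕ) (hpq : p + q = n) : TP k A n →ₗ[k] TP k A p ⊗[k] TP k A q :=
  ∑ S : {S : Finset (Fin n) // S.card = p},
    shuffleSign S.1 •
      ((TensorProduct.congr (castTP k A S.2)
          (castTP k A (card_compl_eq hpq S.1 S.2))).toLinearMap
        ∘ₗ splitTP k A n S.1)

/-- The shuffle map `sh_{p,q} : A^{⊗n} ⊗ A^{⊗n} → A^{⊗p} ⊗ A^{⊗q}` (for `p + q = n`):
the signed sum over all `(p,q)`-shuffles `σ` of the map applying the counit to the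
factors in positions `σ(p+1),…,σ(n)` of the first copy and in positions `σ(1),…,σ(p)`
of the second copy. -/
def shTP (counitA : A →ₗ[k] k) (n p q : ℕ) (hpq : p + q = n) :
    TP k A n ⊗[k] TP k A n →ₗ[k] TP k A p ⊗[k] TP k A q :=
  ∑ S : {S : Finset (Fin n) // S.card = p},
    shuffleSign S.1 •
      TensorProduct.map
        ((castTP k A S.2).toLinearMap ∘ₗ keepTP k A counitA n S.1)
        ((castTP k A (card_compl_eq hpq S.1 S.2)).toLinearMap ∘ₗ keepTP k A counitA n S.1ᶜ)

end Shuffle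

/-! ### The Connes–Moscovici style cocyclic module `C^n(H, M) = M ⊗_H H^{⊗(n+1)}` -/

section CMcochain
variable (A M : Type) [Ring A] [Algebra k A] [AddCommGroup M] [Module k M]

/-- The coface maps of the cocyclic module `C(H,M)` at the level of
`M ⊗ H^{⊗(n+1)}`: for `i ≤ n` the comultiplication is applied to the `i`-th factor,
and for `i = n+1` we take the flip-over coface
`m ⊗ h₀ ⊗ ⋯ ⊗ hₙ ↦ m⁽⁰⁾ ⊗ h₀⁽²⁾ ⊗ h₁ ⊗ ⋯ ⊗ hₙ ⊗ m⁽⁻¹⁾h₀⁽¹⁾`. -/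
def cofaceCM (comulA : A →ₗ[k] A ⊗[k] A) (coact : M →ₗ[k] A ⊗[k] M) (n : ℕ)
    (i : Fin (n + 2)) : M ⊗[k] TP k A (n + 1) →ₗ[k] M ⊗[k] TP k A (n + 2) :=
  if h : i.val ≤ n then
    LinearMap.lTensor M (comulAt k A comulA (n + 1) ⟨i.val, by omega⟩)
  else
    LinearMap.lTensor M
        (snoc k A (n + 1) ∘ₗ (TensorProduct.comm k A (TP k A (n + 1))).toLinearMap)
      ∘ₗ (TensorProduct.leftComm k A M (TP k A (n + 1))).toLinearMap
      ∘ₗ LinearMap.rTensor (M ⊗[k] TP k A (n + 1)) (LinearMap.mul' k A)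
      ∘ₗ (TensorProduct.tensorTensorTensorComm k A M A (TP k A (n + 1))).toLinearMap
      ∘ₗ ((LinearMap.rTensor (TP k A (n + 2)) coact
      ∘ₗ LinearMap.lTensor M (comulAt k A comulA (n + 1) ⟨0, by omega⟩) :
        M ⊗[k] TP k A (n + 1) →ₗ[k] (A ⊗[k] M) ⊗[k] TP k A (n + 2)) :
        M ⊗[k] TP k A (n + 1) →ₗ[k] (A ⊗[k] M) ⊗[k] (A ⊗[k] TP k A (n + 1)))

/-- The codegeneracy maps of the cocyclic module `C(H,M)` at the level of
`M ⊗ H^{⊗(n+2)}`: `σᵢ` applies the counit to the `(i+1)`-st factor. -/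
def codegenCM (counitA : A →ₗ[k] k) (n : ℕ) (i : Fin (n + 1)) :
    M ⊗[k] TP k A (n + 2) →ₗ[k] M ⊗[k] TP k A (n + 1) :=
  LinearMap.lTensor M (dropAt k A counitA (n + 1) ⟨i.val + 1, by omega⟩)

/-- The cocyclic operator of `C(H,M)` at the level of `M ⊗ H^{⊗(n+1)}`:
`τₙ(m ⊗ h₀ ⊗ ⋯ ⊗ hₙ) = m⁽⁰⁾ ⊗ h₁ ⊗ ⋯ ⊗ hₙ ⊗ m⁽⁻¹⁾h₀`. -/
def tauCM (coact : M →ₗ[k] A ⊗[k] M) (n : ℕ) :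
    M ⊗[k] TP k A (n + 1) →ₗ[k] M ⊗[k] TP k A (n + 1) :=
  LinearMap.lTensor M (snoc k A n ∘ₗ (TensorProduct.comm k A (TP k A n)).toLinearMap)
    ∘ₗ (TensorProduct.leftComm k A M (TP k A n)).toLinearMap
    ∘ₗ LinearMap.rTensor (M ⊗[k] TP k A n) (LinearMap.mul' k A)
    ∘ₗ (TensorProduct.tensorTensorTensorComm k A M A (TP k A n)).toLinearMap
    ∘ₗ LinearMap.rTensor (TP k A (n + 1)) coact

/-- The relators defining `C^n(H, M) = M ⊗_H H^{⊗(n+1)}` as a quotient of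
`M ⊗ H^{⊗(n+1)}`: the span of all `m·h ⊗ t − m ⊗ h·t`, where `h` acts diagonally
(through the comultiplication) on `t ∈ H^{⊗(n+1)}`. -/
def cmRel (comulA : A →ₗ[k] A ⊗[k] A) (act : M →ₗ[k] A →ₗ[k] M) (n : ℕ) :
    Submodule k (M ⊗[k] TP k A (n + 1)) :=
  Submodule.span k {x | ∃ (m : M) (h : A) (t : TP k A (n + 1)),
    x = act m h ⊗ₜ[k] t - m ⊗ₜ[k] diagTP k A comulA n (h ⊗ₜ[k] t)}

/-- The Hopf-cyclic cochain space `C^n(H, M) = M ⊗_H H^{⊗(n+1)}`. -/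
def CM (comulA : A →ₗ[k] A ⊗[k] A) (act : M →ₗ[k] A →ₗ[k] M) (n : ℕ) : Type :=
  (M ⊗[k] TP k A (n + 1)) ⧸ cmRel k A M comulA act n

instance (comulA : A →ₗ[k] A ⊗[k] A) (act : M →ₗ[k] A →ₗ[k] M) (n : ℕ) :
    AddCommGroup (CM k A M comulA act n) :=
  inferInstanceAs (AddCommGroup ((M ⊗[k] TP k A (n + 1)) ⧸ cmRel k A M comulA act n))

instance (comulA : A →ₗ[k] A ⊗[k] A) (act : M →ₗ[k] A →ₗ[k] M) (n : ℕ) :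
    Module k (CM k A M comulA act n) :=
  inferInstanceAs (Module k ((M ⊗[k] TP k A (n + 1)) ⧸ cmRel k A M comulA act n))

/-- The canonical projection `M ⊗ H^{⊗(n+1)} → C^n(H,M)`. -/
def cmMk (comulA : A →ₗ[k] A ⊗[k] A) (act : M →ₗ[k] A →ₗ[k] M) (n : ℕ) :
    M ⊗[k] TP k A (n + 1) →ₗ[k] CM k A M comulA act n :=
  (cmRel k A M comulA act n).mkQ

end CMcochain

/-! ### The cyclic module `C̃ₙ(H,M)` (Hopf-cyclic homology) -/

section CyChain
variable (A M : Type) [Ring A] [Algebra k A] [AddCommGroup M] [Module k M]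

/-- The cyclic operator `τₙ(h₀ ⊗ ⋯ ⊗ hₙ ⊗ m) = hₙ⁽¹⁾ ⊗ h₀ ⊗ ⋯ ⊗ h_{n-1} ⊗ hₙ⁽²⁾·m`
at the level of `H^{⊗(n+1)} ⊗ M`. -/
def tauCy (comulA : A →ₗ[k] A ⊗[k] A) (act : A →ₗ[k] M →ₗ[k] M) (n : ℕ) :
    TP k A (n + 1) ⊗[k] M →ₗ[k] TP k A (n + 1) ⊗[k] M :=
  TensorProduct.map LinearMap.id (TensorProduct.lift act)
    ∘ₗ (TensorProduct.tensorTensorTensorComm k A A (TP k A n) M).toLinearMap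
    ∘ₗ (TensorProduct.assoc k (A ⊗[k] A) (TP k A n) M).toLinearMap
    ∘ₗ LinearMap.rTensor M (LinearMap.rTensor (TP k A n) comulA)
    ∘ₗ LinearMap.rTensor M (lastSplit k A n)

/-- The face maps of `C̃(H,M)` at the level of `H^{⊗(n+2)} ⊗ M`: for `i ≤ n`,
`δᵢ` multiplies the `i`-th and `(i+1)`-st factors; the last face is
`δ_{n+1}(h₀ ⊗ ⋯ ⊗ h_{n+1} ⊗ m) = h_{n+1}⁽¹⁾h₀ ⊗ h₁ ⊗ ⋯ ⊗ hₙ ⊗ h_{n+1}⁽²⁾·m`. -/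
def faceCy (comulA : A →ₗ[k] A ⊗[k] A) (act : A →ₗ[k] M →ₗ[k] M) (n : ℕ)
    (i : Fin (n + 2)) : TP k A (n + 2) ⊗[k] M →ₗ[k] TP k A (n + 1) ⊗[k] M :=
  if h : i.val ≤ n then
    LinearMap.rTensor M (mulAt k A n ⟨i.val, by omega⟩)
  else
    LinearMap.rTensor M (mulAt k A n ⟨0, by omega⟩)
      ∘ₗ tauCy k A M comulA act (n + 1)

/-- The degeneracy maps of `C̃(H,M)` at the level of `H^{⊗(n+1)} ⊗ M`: `σᵢ` inserts a
`1` after the `i`-th tensor factor. -/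
def degenCy (n : ℕ) (i : Fin (n + 1)) :
    TP k A (n + 1) ⊗[k] M →ₗ[k] TP k A (n + 2) ⊗[k] M :=
  LinearMap.rTensor M (insertOneAt k A n i)

/-- The map whose kernel is the cotensor product `H^{⊗(n+1)} □_H M`
(diagonal right coaction on `H^{⊗(n+1)}`, left coaction `coact` on `M`). -/
def cotensorMapCy (comulA : A →ₗ[k] A ⊗[k] A) (coact : M →ₗ[k] A ⊗[k] M) (n : ℕ) :
    TP k A (n + 1) ⊗[k] M →ₗ[k] TP k A (n + 1) ⊗[k] (A ⊗[k] M) :=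
  (TensorProduct.assoc k (TP k A (n + 1)) A M).toLinearMap
      ∘ₗ LinearMap.rTensor M (codiagTP k A comulA (n + 1))
    - LinearMap.lTensor (TP k A (n + 1)) coact

/-- The cotensor product `C̃ₙ(H,M) = H^{⊗(n+1)} □_H M`, as a submodule of
`H^{⊗(n+1)} ⊗ M`. -/
def cotensorCy (comulA : A →ₗ[k] A ⊗[k] A) (coact : M →ₗ[k] A ⊗[k] M) (n : ℕ) :
    Submodule k (TP k A (n + 1) ⊗[k] M) :=
  LinearMap.ker (cotensorMapCy k A M comulA coact n)

end CyChain

/-! ### (Stable) anti-Yetter–Drinfeld conditions -/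

section AYD

variable (A M : Type) [Ring A] [Algebra k A] [AddCommGroup M] [Module k M]

/-- `M` is a right `A`-module via the bilinear map `act`. -/
def IsRightAction (act : M →ₗ[k] A →ₗ[k] M) : Prop :=
  (∀ m : M, act m 1 = m) ∧ ∀ (m : M) (a b : A), act (act m a) b = act m (a * b)

/-- `M` is a left `A`-module via the bilinear map `act`. -/
def IsLeftAction (act : A →ₗ[k] M →ₗ[k] M) : Prop :=
  (∀ m : M, act 1 m = m) ∧ ∀ (a b : A) (m : M), act a (act b m) = act (a * b) m

/-- `coact` makes `M` a left `A`-comodule, with respect to the comultiplication `comulA`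
and counit `counitA`. -/
def IsLeftCoaction (comulA : A →ₗ[k] A ⊗[k] A) (counitA : A →ₗ[k] k)
    (coact : M →ₗ[k] A ⊗[k] M) : Prop :=
  (LinearMap.rTensor M comulA ∘ₗ coact
      = (TensorProduct.assoc k A A M).symm.toLinearMap ∘ₗ LinearMap.lTensor A coact ∘ₗ coact)
  ∧ ∀ m : M, (TensorProduct.lid k M) (LinearMap.rTensor M counitA (coact m)) = m

/-- The iterated comultiplication `h ↦ h⁽¹⁾ ⊗ (h⁽²⁾ ⊗ h⁽³⁾)`. -/
def comul₂ (comulA : A →ₗ[k] A ⊗[k] A) : A →ₗ[k] A ⊗[k] (A ⊗[k] A) :=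
  LinearMap.lTensor A comulA ∘ₗ comulA

/-- The linear map `(a ⊗ m) ⊗ (h₁ ⊗ (h₂ ⊗ h₃)) ↦ (S(h₃) * a * h₁) ⊗ (m · h₂)`,
the right-hand side of the (right-module, left-comodule) anti-Yetter–Drinfeld
condition. -/
def aydRHS (antipodeA : A →ₗ[k] A) (act : M →ₗ[k] A →ₗ[k] M) :
    (A ⊗[k] M) ⊗[k] (A ⊗[k] (A ⊗[k] A)) →ₗ[k] A ⊗[k] M :=
  TensorProduct.map (LinearMap.mul' k A ∘ₗ LinearMap.lTensor A (LinearMap.mul' k A))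
      (TensorProduct.lift act)
    ∘ₗ (TensorProduct.assoc k A (A ⊗[k] A) (M ⊗[k] A)).symm.toLinearMap
    ∘ₗ (TensorProduct.leftComm k (A ⊗[k] A) A (M ⊗[k] A)).toLinearMap
    ∘ₗ LinearMap.lTensor (A ⊗[k] A)
        ((TensorProduct.leftComm k M A A).toLinearMap
          ∘ₗ LinearMap.lTensor M (TensorProduct.comm k A A).toLinearMap)
    ∘ₗ (TensorProduct.tensorTensorTensorComm k A M A (A ⊗[k] A)).toLinearMap
    ∘ₗ LinearMap.lTensor (A ⊗[k] M) (LinearMap.lTensor A (LinearMap.lTensor A antipodeA))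

/-- The anti-Yetter–Drinfeld compatibility condition
`φ(m·h) = S(h⁽³⁾) m⁽⁻¹⁾ h⁽¹⁾ ⊗ m⁽⁰⁾·h⁽²⁾`, written without Sweedler notation. -/
def IsAYD (comulA : A →ₗ[k] A ⊗[k] A) (antipodeA : A →ₗ[k] A)
    (act : M →ₗ[k] A →ₗ[k] M) (coact : M →ₗ[k] A ⊗[k] M) : Prop :=
  ∀ (m : M) (h : A),
    coact (act m h) = aydRHS k A M antipodeA act (coact m ⊗ₜ[k] comul₂ k A comulA h)

/-- The stability condition `m⁽⁰⁾ · m⁽⁻¹⁾ = m` for a right module, left comodule. -/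
def IsStable (act : M →ₗ[k] A →ₗ[k] M) (coact : M →ₗ[k] A ⊗[k] M) : Prop :=
  ∀ m : M, TensorProduct.lift act (TensorProduct.comm k A M (coact m)) = m

/-- The linear map `(h₁ ⊗ (h₂ ⊗ h₃)) ⊗ (a ⊗ m) ↦ (h₁ * a * S(h₃)) ⊗ (h₂ · m)`,
the right-hand side of the left-left anti-Yetter–Drinfeld condition. -/
def llAydRHS (antipodeA : A →ₗ[k] A) (act : A →ₗ[k] M →ₗ[k] M) :
    (A ⊗[k] (A ⊗[k] A)) ⊗[k] (A ⊗[k] M) →ₗ[k] A ⊗[k] M :=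
  TensorProduct.map (LinearMap.mul' k A) (TensorProduct.lift act)
    ∘ₗ (TensorProduct.tensorTensorTensorComm k A A A M).toLinearMap
    ∘ₗ LinearMap.rTensor (A ⊗[k] M)
        ((TensorProduct.comm k A A).toLinearMap
          ∘ₗ LinearMap.lTensor A (LinearMap.mul' k A)
          ∘ₗ (TensorProduct.assoc k A A A).toLinearMap
          ∘ₗ LinearMap.rTensor A (TensorProduct.comm k A A).toLinearMap)
    ∘ₗ (TensorProduct.tensorTensorTensorComm k (A ⊗[k] A) A A M).toLinearMap
    ∘ₗ LinearMap.rTensor (A ⊗[k] M) (TensorProduct.assoc k A A A).symm.toLinearMap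
    ∘ₗ LinearMap.rTensor (A ⊗[k] M) (LinearMap.lTensor A (LinearMap.lTensor A antipodeA))

/-- The left-left anti-Yetter–Drinfeld condition
`φ(h·m) = h⁽¹⁾ m⁽⁻¹⁾ S(h⁽³⁾) ⊗ h⁽²⁾·m⁽⁰⁾`. -/
def IsLLAYD (comulA : A →ₗ[k] A ⊗[k] A) (antipodeA : A →ₗ[k] A)
    (act : A →ₗ[k] M →ₗ[k] M) (coact : M →ₗ[k] A ⊗[k] M) : Prop :=
  ∀ (h : A) (m : M),
    coact (act h m) = llAydRHS k A M antipodeA act (comul₂ k A comulA h ⊗ₜ[k] coact m)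

/-- The stability condition `m⁽⁻¹⁾ · m⁽⁰⁾ = m` for a left module, left comodule. -/
def IsLLStable (act : A →ₗ[k] M →ₗ[k] M) (coact : M →ₗ[k] A ⊗[k] M) : Prop :=
  ∀ m : M, TensorProduct.lift act (coact m) = m

end AYD

/-! ### Tensor products of (co)module structures -/

section TensorStructures

variable (A B M N : Type) [Ring A] [Algebra k A] [Ring B] [Algebra k B]
variable [AddCommGroup M] [Module k M] [AddCommGroup N] [Module k N]

/-- The componentwise right action of `A ⊗ B` on `M ⊗ N`. -/
def tensorAct (actM : M →ₗ[k] A →ₗ[k] M) (actN : N →ₗ[k] B →ₗ[k] N) :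
    M ⊗[k] N →ₗ[k] (A ⊗[k] B) →ₗ[k] M ⊗[k] N :=
  TensorProduct.curry
    (TensorProduct.map (TensorProduct.lift actM) (TensorProduct.lift actN)
      ∘ₗ (TensorProduct.tensorTensorTensorComm k M N A B).toLinearMap)

/-- The componentwise left action of `A ⊗ B` on `M ⊗ N`. -/
def tensorLAct (actM : A →ₗ[k] M →ₗ[k] M) (actN : B →ₗ[k] N →ₗ[k] N) :
    (A ⊗[k] B) →ₗ[k] M ⊗[k] N →ₗ[k] M ⊗[k] N :=
  TensorProduct.curry
    (TensorProduct.map (TensorProduct.lift actM) (TensorProduct.lift actN)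
      ∘ₗ (TensorProduct.tensorTensorTensorComm k A B M N).toLinearMap)

/-- The coaction `m ⊗ n ↦ (m⁽⁻¹⁾ ⊗ n⁽⁻¹⁾) ⊗ (m⁽⁰⁾ ⊗ n⁽⁰⁾)` of `A ⊗ B` on `M ⊗ N`. -/
def tensorCoact (coactM : M →ₗ[k] A ⊗[k] M) (coactN : N →ₗ[k] B ⊗[k] N) :
    M ⊗[k] N →ₗ[k] (A ⊗[k] B) ⊗[k] (M ⊗[k] N) :=
  (TensorProduct.tensorTensorTensorComm k A M B N).toLinearMap
    ∘ₗ TensorProduct.map coactM coactN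

/-- The comultiplication `(a ⊗ b) ↦ (a⁽¹⁾ ⊗ b⁽¹⁾) ⊗ (a⁽²⁾ ⊗ b⁽²⁾)` of a tensor product. -/
def tensorComul (comulA : A →ₗ[k] A ⊗[k] A) (comulB : B →ₗ[k] B ⊗[k] B) :
    (A ⊗[k] B) →ₗ[k] (A ⊗[k] B) ⊗[k] (A ⊗[k] B) :=
  (TensorProduct.tensorTensorTensorComm k A A B B).toLinearMap
    ∘ₗ TensorProduct.map comulA comulB

/-- The antipode `S ⊗ S` of a tensor product. -/
def tensorAntipode (antipodeA : A →ₗ[k] A) (antipodeB : B →ₗ[k] B) :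
    (A ⊗[k] B) →ₗ[k] A ⊗[k] B :=
  TensorProduct.map antipodeA antipodeB

/-- The rearrangement
`(m ⊗ n) ⊗ ((a₀⊗b₀) ⊗ ⋯ ⊗ (aₙ⊗bₙ)) ↦ (m ⊗ a₀⊗⋯⊗aₙ) ⊗ (n ⊗ b₀⊗⋯⊗bₙ)`
identifying the underlying space of `C^n(A ⊗ B, M ⊗ N)` with the tensor product of
those of `C^n(A, M)` and `C^n(B, N)`. -/
def OmegaCM (n : ℕ) :
    (M ⊗[k] N) ⊗[k] TP k (A ⊗[k] B) (n + 1) ≃ₗ[k]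
      (M ⊗[k] TP k A (n + 1)) ⊗[k] (N ⊗[k] TP k B (n + 1)) :=
  TensorProduct.congr (LinearEquiv.refl k (M ⊗[k] N)) (OmegaTP k A B (n + 1)) ≪≫ₗ
    TensorProduct.tensorTensorTensorComm k M N (TP k A (n + 1)) (TP k B (n + 1))

/-- The rearrangement
`((a₀⊗b₀) ⊗ ⋯ ⊗ (aₙ⊗bₙ)) ⊗ (m ⊗ n) ↦ (a₀⊗⋯⊗aₙ ⊗ m) ⊗ (b₀⊗⋯⊗bₙ ⊗ n)`
identifying the underlying space of `C̃ₙ(A ⊗ B, M ⊗ N)` with the tensor product of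
those of `C̃ₙ(A, M)` and `C̃ₙ(B, N)`. -/
def OmegaCy (n : ℕ) :
    TP k (A ⊗[k] B) (n + 1) ⊗[k] (M ⊗[k] N) ≃ₗ[k]
      (TP k A (n + 1) ⊗[k] M) ⊗[k] (TP k B (n + 1) ⊗[k] N) :=
  TensorProduct.congr (OmegaTP k A B (n + 1)) (LinearEquiv.refl k (M ⊗[k] N)) ≪≫ₗ
    TensorProduct.tensorTensorTensorComm k (TP k A (n + 1)) (TP k B (n + 1)) M N

end TensorStructures

end HopfCyclicStmt



open HopfCyclicStmt

variable (k : Type) [Field k] [CharZero k]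
variable (H : Type) [Ring H] [HopfAlgebra k H]

/-- The map `ρₙ : H^{⊗n} → H^{⊗n} ⊗ H^{⊗n}`,
`ρₙ(h₁⊗⋯⊗hₙ) = (h₁⁽¹⁾⊗⋯⊗hₙ⁽¹⁾) ⊗ (h₁⁽²⁾⊗⋯⊗hₙ⁽²⁾)`. -/
def rhoCM (n : ℕ) : TP k H n →ₗ[k] TP k H n ⊗[k] TP k H n :=
  (OmegaTP k H H n).toLinearMap ∘ₗ TPdiag k H (Coalgebra.comul) n


/-! ### Abstract auxiliary lemmas (clean module-level world) -/

section AbsAux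

variable {K : Type} [Field K]
variable {C M M₁ M₂ P X Y X' Y' : Type}
variable [AddCommGroup C] [Module K C] [AddCommGroup M] [Module K M]
variable [AddCommGroup M₁] [Module K M₁] [AddCommGroup M₂] [Module K M₂]
variable [AddCommGroup P] [Module K P]
variable [AddCommGroup X] [Module K X] [AddCommGroup Y] [Module K Y]
variable [AddCommGroup X'] [Module K X'] [AddCommGroup Y'] [Module K Y']

lemma absGk1 (s : M →ₗ[K] X ⊗[K] Y) (e : Y' →ₗ[K] K) (e' : Y →ₗ[K] K)
    (c1 : C ⊗[K] X ≃ₗ[K] X') (c2 : Y ≃ₗ[K] Y') (hy : ∀ y, e (c2 y) = e' y) :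
    (TensorProduct.rid K X').toLinearMap ∘ₗ LinearMap.lTensor X' e ∘ₗ
        ((TensorProduct.congr c1 c2).toLinearMap ∘ₗ
          (TensorProduct.assoc K C X Y).symm.toLinearMap ∘ₗ LinearMap.lTensor C s)
      = c1.toLinearMap ∘ₗ LinearMap.lTensor C
          ((TensorProduct.rid K X).toLinearMap ∘ₗ LinearMap.lTensor X e' ∘ₗ s) := by
  apply TensorProduct.ext'
  intro a m
  simp only [LinearMap.comp_apply, LinearMap.lTensor_tmul, LinearEquiv.coe_coe]
  generalize s m = w
  induction w using TensorProduct.induction_on with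
  | zero => simp
  | tmul x y =>
      simp [hy, TensorProduct.assoc_symm_tmul, TensorProduct.congr_tmul,
        TensorProduct.rid_tmul, TensorProduct.tmul_smul]
  | add u v hu hv => simp only [TensorProduct.tmul_add, map_add, hu, hv]

lemma absGk2 (εC : C →ₗ[K] K) (s : M →ₗ[K] X ⊗[K] Y) (e : Y' →ₗ[K] K) (e'' : Y →ₗ[K] K)
    (c1 : X ≃ₗ[K] X') (c2 : C ⊗[K] Y ≃ₗ[K] Y')
    (hy : ∀ (c : C) (y : Y), e (c2 (c ⊗ₜ[K] y)) = εC c * e'' y) :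
    (TensorProduct.rid K X').toLinearMap ∘ₗ LinearMap.lTensor X' e ∘ₗ
        ((TensorProduct.congr c1 c2).toLinearMap ∘ₗ
          (TensorProduct.leftComm K C X Y).toLinearMap ∘ₗ LinearMap.lTensor C s)
      = c1.toLinearMap ∘ₗ
          ((TensorProduct.rid K X).toLinearMap ∘ₗ LinearMap.lTensor X e'' ∘ₗ s) ∘ₗ
          (TensorProduct.lid K M).toLinearMap ∘ₗ LinearMap.rTensor M εC := by
  apply TensorProduct.ext'
  intro a m
  simp only [LinearMap.comp_apply, LinearMap.lTensor_tmul, LinearMap.rTensor_tmul,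
    LinearEquiv.coe_coe, TensorProduct.lid_tmul, map_smul]
  generalize s m = w
  induction w using TensorProduct.induction_on with
  | zero => simp
  | tmul x y =>
      simp only [TensorProduct.leftComm_tmul, TensorProduct.congr_tmul,
        LinearMap.lTensor_tmul, TensorProduct.rid_tmul, LinearEquiv.coe_coe, hy,
        map_smul, TensorProduct.tmul_smul, smul_smul]
  | add u v hu hv => simp only [TensorProduct.tmul_add, map_add, smul_add, hu, hv]

lemma absK0 (c1 : K ≃ₗ[K] X') (c2 : K ≃ₗ[K] Y') (e : Y' →ₗ[K] K)
    (hy : ∀ y, e (c2 y) = y) :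
    (TensorProduct.rid K X').toLinearMap ∘ₗ LinearMap.lTensor X' e ∘ₗ
        ((TensorProduct.congr c1 c2).toLinearMap ∘ₗ
          (TensorProduct.lid K K).symm.toLinearMap)
      = c1.toLinearMap := by
  apply LinearMap.ext_ring
  simp [TensorProduct.lid_symm_apply, TensorProduct.congr_tmul, hy,
    TensorProduct.rid_tmul]

lemma absBase (c1 : K ≃ₗ[K] X') (c2 : K ≃ₗ[K] Y') :
    TensorProduct.map c1.toLinearMap c2.toLinearMap ∘ₗ
        (TensorProduct.lid K K).symm.toLinearMap ∘ₗ LinearMap.id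
      = (TensorProduct.congr c1 c2).toLinearMap ∘ₗ
        (TensorProduct.lid K K).symm.toLinearMap := by
  apply LinearMap.ext_ring
  simp [TensorProduct.lid_symm_apply]

lemma absA1 (Δ' : C →ₗ[K] C ⊗[K] C) (ε' : C →ₗ[K] K)
    (hcu : ∀ c, (TensorProduct.rid K C) (LinearMap.lTensor C ε' (Δ' c)) = c)
    (T' : M →ₗ[K] P) (W : P ≃ₗ[K] M₁ ⊗[K] M₂)
    (f : M₁ →ₗ[K] X) (g : M₂ →ₗ[K] Y)
    (c1 : C ⊗[K] X ≃ₗ[K] X') (c2 : Y ≃ₗ[K] Y') :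
    TensorProduct.map (c1.toLinearMap ∘ₗ LinearMap.lTensor C f)
        (c2.toLinearMap ∘ₗ g ∘ₗ (TensorProduct.lid K M₂).toLinearMap ∘ₗ
          LinearMap.rTensor M₂ ε')
      ∘ₗ (TensorProduct.congr (LinearEquiv.refl K (C ⊗[K] C)) W ≪≫ₗ
          TensorProduct.tensorTensorTensorComm K C C M₁ M₂).toLinearMap
      ∘ₗ TensorProduct.map Δ' T'
    = (TensorProduct.congr c1 c2).toLinearMap
      ∘ₗ (TensorProduct.assoc K C X Y).symm.toLinearMap
      ∘ₗ LinearMap.lTensor C (TensorProduct.map f g ∘ₗ W.toLinearMap ∘ₗ T') := by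
  apply TensorProduct.ext'
  intro a t
  simp only [LinearMap.comp_apply, TensorProduct.map_tmul, LinearEquiv.trans_apply,
    TensorProduct.congr_tmul, LinearEquiv.refl_apply, LinearMap.lTensor_tmul,
    LinearEquiv.coe_coe]
  conv_rhs => rw [← hcu a]
  generalize W (T' t) = b
  generalize Δ' a = d
  induction d using TensorProduct.induction_on with
  | zero => simp
  | tmul u v =>
      induction b using TensorProduct.induction_on with
      | zero => simp
      | tmul m n =>
          simp only [TensorProduct.tensorTensorTensorComm_tmul, TensorProduct.map_tmul,
            LinearMap.comp_apply, LinearMap.lTensor_tmul, LinearMap.rTensor_tmul,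
            TensorProduct.lid_tmul, TensorProduct.rid_tmul, LinearEquiv.coe_coe,
            map_smul, TensorProduct.congr_tmul, TensorProduct.assoc_symm_tmul,
            TensorProduct.smul_tmul', TensorProduct.tmul_smul]
          simp only [← TensorProduct.smul_tmul', map_smul]
      | add b1 b2 h1 h2 =>
          simp only [TensorProduct.tmul_add, map_add, h1, h2]
  | add d1 d2 h1 h2 =>
      simp only [TensorProduct.add_tmul, map_add, h1, h2]

lemma absA2 (Δ' : C →ₗ[K] C ⊗[K] C) (ε' : C →ₗ[K] K)
    (hcu : ∀ c, (TensorProduct.lid K C) (LinearMap.rTensor C ε' (Δ' c)) = c)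
    (T' : M →ₗ[K] P) (W : P ≃ₗ[K] M₁ ⊗[K] M₂)
    (f : M₁ →ₗ[K] X) (g : M₂ →ₗ[K] Y)
    (c1 : X ≃ₗ[K] X') (c2 : C ⊗[K] Y ≃ₗ[K] Y') :
    TensorProduct.map
        (c1.toLinearMap ∘ₗ f ∘ₗ (TensorProduct.lid K M₁).toLinearMap ∘ₗ
          LinearMap.rTensor M₁ ε')
        (c2.toLinearMap ∘ₗ LinearMap.lTensor C g)
      ∘ₗ (TensorProduct.congr (LinearEquiv.refl K (C ⊗[K] C)) W ≪≫ₗ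
          TensorProduct.tensorTensorTensorComm K C C M₁ M₂).toLinearMap
      ∘ₗ TensorProduct.map Δ' T'
    = (TensorProduct.congr c1 c2).toLinearMap
      ∘ₗ (TensorProduct.leftComm K C X Y).toLinearMap
      ∘ₗ LinearMap.lTensor C (TensorProduct.map f g ∘ₗ W.toLinearMap ∘ₗ T') := by
  apply TensorProduct.ext'
  intro a t
  simp only [LinearMap.comp_apply, TensorProduct.map_tmul, LinearEquiv.trans_apply,
    TensorProduct.congr_tmul, LinearEquiv.refl_apply, LinearMap.lTensor_tmul,
    LinearEquiv.coe_coe]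
  conv_rhs => rw [← hcu a]
  generalize W (T' t) = b
  generalize Δ' a = d
  induction d using TensorProduct.induction_on with
  | zero => simp
  | tmul u v =>
      induction b using TensorProduct.induction_on with
      | zero => simp
      | tmul m n =>
          simp only [TensorProduct.tensorTensorTensorComm_tmul, TensorProduct.map_tmul,
            LinearMap.comp_apply, LinearMap.lTensor_tmul, LinearMap.rTensor_tmul,
            TensorProduct.lid_tmul, TensorProduct.rid_tmul, LinearEquiv.coe_coe,
            map_smul, TensorProduct.congr_tmul, TensorProduct.leftComm_tmul,
            TensorProduct.smul_tmul', TensorProduct.tmul_smul]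
          simp only [← TensorProduct.smul_tmul', map_smul, TensorProduct.tmul_smul]
      | add b1 b2 h1 h2 =>
          simp only [TensorProduct.tmul_add, map_add, h1, h2]
  | add d1 d2 h1 h2 =>
      simp only [TensorProduct.add_tmul, map_add, h1, h2]

lemma absB0 (c1 : K ≃ₗ[K] X') (c2 : K ≃ₗ[K] Y') :
    ((TensorProduct.congr c1 c2).toLinearMap ∘ₗ
        (TensorProduct.lid K K).symm.toLinearMap) (1 : K)
      = c1 1 ⊗ₜ[K] c2 1 := by
  simp [TensorProduct.lid_symm_apply, TensorProduct.congr_tmul]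

lemma absB1 (s : M →ₗ[K] X ⊗[K] Y) (c1 : C ⊗[K] X ≃ₗ[K] X') (c2 : Y ≃ₗ[K] Y')
    (a : C) (m : M) (x : X) (y : Y) (hs : s m = x ⊗ₜ[K] y) :
    ((TensorProduct.congr c1 c2).toLinearMap ∘ₗ
        (TensorProduct.assoc K C X Y).symm.toLinearMap ∘ₗ
        LinearMap.lTensor C s) (a ⊗ₜ[K] m)
      = c1 (a ⊗ₜ[K] x) ⊗ₜ[K] c2 y := by
  simp [hs, TensorProduct.assoc_symm_tmul, TensorProduct.congr_tmul]

lemma absB2 (s : M →ₗ[K] X ⊗[K] Y) (c1 : X ≃ₗ[K] X') (c2 : C ⊗[K] Y ≃ₗ[K] Y')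
    (a : C) (m : M) (x : X) (y : Y) (hs : s m = x ⊗ₜ[K] y) :
    ((TensorProduct.congr c1 c2).toLinearMap ∘ₗ
        (TensorProduct.leftComm K C X Y).toLinearMap ∘ₗ
        LinearMap.lTensor C s) (a ⊗ₜ[K] m)
      = c1 x ⊗ₜ[K] c2 (a ⊗ₜ[K] y) := by
  simp [hs, TensorProduct.leftComm_tmul, TensorProduct.congr_tmul]

end AbsAux

/-! ### Lemmas about `TP`, `castTP`, `epsAll`, `keepTP`, `splitTP` -/

section TPAux

lemma eps_cast {m m' : ℕ} (h : m = m') (x : TP k H m) :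
    epsAll k H (Coalgebra.counit) m' (castTP k H h x)
      = epsAll k H (Coalgebra.counit) m x := by
  subst h; rfl

lemma absEps {K C M : Type} [Field K] [AddCommGroup C] [Module K C]
    [AddCommGroup M] [Module K M] (e1 : C →ₗ[K] K) (e2 : M →ₗ[K] K) (a : C) (y : M) :
    (TensorProduct.lid K K) (TensorProduct.map e1 e2 (a ⊗ₜ[K] y)) = e1 a * e2 y := by
  simp

lemma eps_cast_succ {m m' : ℕ} (h : m + 1 = m') (a : H) (y : TP k H m) :
    epsAll k H (Coalgebra.counit) m' (castTP k H h ((a ⊗ₜ[k] y : H ⊗[k] TP k H m)))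
      = Coalgebra.counit (R := k) a * epsAll k H (Coalgebra.counit) m y := by
  subst h
  exact absEps (K := k) (Coalgebra.counit) (epsAll k H (Coalgebra.counit) m) a y

lemma castTP_tp {m m' : ℕ} (h : m = m') (f : Fin m → H) :
    castTP k H h (tp k H m f) = tp k H m' (fun i => f (Fin.cast h.symm i)) := by
  subst h; rfl

lemma cast_zero_tp {m : ℕ} (e : 0 = m) (f0 : Fin 0 → H) (g : Fin m → H) :
    castTP k H e (tp k H 0 f0) = tp k H m g := by
  subst e; rfl

lemma tp_succ (m : ℕ) (F : Fin (m + 1) → H) :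
    tp k H (m + 1) F = F 0 ⊗ₜ[k] tp k H m (fun i => F i.succ) := rfl

lemma tp_cons (m : ℕ) (a : H) (g : Fin m → H) :
    tp k H (m + 1) (Fin.cons a g) = a ⊗ₜ[k] tp k H m g := by
  rw [tp_succ]
  simp
  rfl

lemma mem_tailSet {n : ℕ} {S : Finset (Fin (n + 1))} {i : Fin n} :
    i ∈ tailSet S ↔ i.succ ∈ S := by
  simp [tailSet]

set_option maxHeartbeats 2000000 in
lemma keep_rec_mem {n : ℕ} (S : Finset (Fin (n + 1))) (h0 : (0 : Fin (n + 1)) ∈ S) :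
    keepTP k H (Coalgebra.counit) (n + 1) S
      = (castTP k H (show (tailSet S).card + 1 = S.card by
            simpa using tailSet_card_mem S h0)).toLinearMap
        ∘ₗ LinearMap.lTensor H (keepTP k H (Coalgebra.counit) n (tailSet S)) := by
  simp only [keepTP]
  conv_lhs => rw [splitTP.eq_2]; simp only [h0, ↓reduceDIte]
  exact absGk1 _ _ _ _ _ (fun y => eps_cast k H _ y)

set_option maxHeartbeats 2000000 in
lemma keep_rec_notmem {n : ℕ} (S : Finset (Fin (n + 1))) (h0 : (0 : Fin (n + 1)) ∉ S) :
    keepTP k H (Coalgebra.counit) (n + 1) S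
      = (castTP k H (tailSet_card_not_mem S h0)).toLinearMap
        ∘ₗ keepTP k H (Coalgebra.counit) n (tailSet S)
        ∘ₗ (TensorProduct.lid k (TP k H n)).toLinearMap
        ∘ₗ LinearMap.rTensor (TP k H n) (Coalgebra.counit) := by
  simp only [keepTP]
  conv_lhs => rw [splitTP.eq_2]; simp only [h0, ↓reduceDIte]
  exact absGk2 _ _ _ _ _ _ (fun a y => eps_cast_succ k H _ a y)

lemma keep_rec_mem' {n : ℕ} (S : Finset (Fin (n + 1))) (h0 : (0 : Fin (n + 1)) ∈ S)
    (T : Finset (Fin n)) (hT : tailSet S = T) (pf : T.card + 1 = S.card) :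
    keepTP k H (Coalgebra.counit) (n + 1) S
      = (castTP k H pf).toLinearMap
        ∘ₗ LinearMap.lTensor H (keepTP k H (Coalgebra.counit) n T) := by
  subst hT; exact keep_rec_mem k H S h0

lemma keep_rec_notmem' {n : ℕ} (S : Finset (Fin (n + 1))) (h0 : (0 : Fin (n + 1)) ∉ S)
    (T : Finset (Fin n)) (hT : tailSet S = T) (pf : T.card = S.card) :
    keepTP k H (Coalgebra.counit) (n + 1) S
      = (castTP k H pf).toLinearMap
        ∘ₗ keepTP k H (Coalgebra.counit) n T
        ∘ₗ (TensorProduct.lid k (TP k H n)).toLinearMap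
        ∘ₗ LinearMap.rTensor (TP k H n) (Coalgebra.counit) := by
  subst hT; exact keep_rec_notmem k H S h0

lemma keep_zero (S : Finset (Fin 0)) :
    keepTP k H (Coalgebra.counit) 0 S
      = (castTP k H (show 0 = S.card by
          rw [Finset.eq_empty_of_isEmpty S, Finset.card_empty])).toLinearMap := by
  simp only [keepTP]
  conv_lhs => rw [splitTP.eq_1]
  exact absK0 _ _ _ (fun y => eps_cast k H (show (0:ℕ) = Sᶜ.card by
    rw [Finset.eq_empty_of_isEmpty Sᶜ, Finset.card_empty]) y)

set_option maxHeartbeats 2000000 in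
lemma lemA : ∀ (n : ℕ) (S : Finset (Fin n)),
    TensorProduct.map (keepTP k H (Coalgebra.counit) n S)
        (keepTP k H (Coalgebra.counit) n Sᶜ)
      ∘ₗ (OmegaTP k H H n).toLinearMap ∘ₗ TPdiag k H (Coalgebra.comul) n
    = splitTP k H n S := by
  intro n
  induction n with
  | zero =>
      intro S
      rw [keep_zero k H S, keep_zero k H Sᶜ]
      conv_rhs => rw [splitTP.eq_1]
      exact absBase _ _
  | succ n ih =>
      intro S
      by_cases h0 : (0 : Fin (n + 1)) ∈ S
      · have h0c : (0 : Fin (n + 1)) ∉ Sᶜ := by simpa using h0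
        rw [keep_rec_mem' k H S h0 (tailSet S) rfl
              (by simpa using tailSet_card_mem S h0),
            keep_rec_notmem' k H Sᶜ h0c ((tailSet S)ᶜ) (tailSet_compl S).symm
              (by rw [tailSet_compl]; exact tailSet_card_not_mem Sᶜ h0c)]
        conv_rhs => rw [splitTP.eq_2]; simp only [h0, ↓reduceDIte]
        rw [← ih (tailSet S)]
        exact absA1 (Coalgebra.comul) (Coalgebra.counit)
          (fun c => by simp) (TPdiag k H (Coalgebra.comul) n) (OmegaTP k H H n)
          (keepTP k H (Coalgebra.counit) n (tailSet S))
          (keepTP k H (Coalgebra.counit) n (tailSet S)ᶜ) _ _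
      · have h0c : (0 : Fin (n + 1)) ∈ Sᶜ := by simpa using h0
        rw [keep_rec_notmem' k H S h0 (tailSet S) rfl (tailSet_card_not_mem S h0),
            keep_rec_mem' k H Sᶜ h0c ((tailSet S)ᶜ) (tailSet_compl S).symm
              (by rw [tailSet_compl]; simpa using tailSet_card_mem Sᶜ h0c)]
        conv_rhs => rw [splitTP.eq_2]; simp only [h0, ↓reduceDIte]
        rw [← ih (tailSet S)]
        exact absA2 (Coalgebra.comul) (Coalgebra.counit)
          (fun c => by simp) (TPdiag k H (Coalgebra.comul) n) (OmegaTP k H H n)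
          (keepTP k H (Coalgebra.counit) n (tailSet S))
          (keepTP k H (Coalgebra.counit) n (tailSet S)ᶜ) _ _

end TPAux

/-! ### Combinatorics of shuffles via `orderEmbOfFin` -/

section Comb

lemma comb1 {n : ℕ} (S : Finset (Fin (n + 1))) (h0 : (0 : Fin (n + 1)) ∈ S)
    (T : Finset (Fin n)) (hT : tailSet S = T)
    (i : Fin S.card) (j : Fin (T.card + 1)) (hij : (i : ℕ) = (j : ℕ)) :
    S.orderEmbOfFin rfl i
      = (Fin.cons (0 : Fin (n + 1))
          (fun jj => Fin.succ (T.orderEmbOfFin rfl jj)) :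
            Fin (T.card + 1) → Fin (n + 1)) j := by
  subst hT
  have pf : S.card = (tailSet S).card + 1 := by
    simpa using (tailSet_card_mem S h0).symm
  have hmem : ∀ j, (Fin.cons (0 : Fin (n + 1))
      (fun j => Fin.succ ((tailSet S).orderEmbOfFin rfl j)) : Fin ((tailSet S).card + 1) → Fin (n+1)) j ∈ S := by
    intro j
    induction j using Fin.cases with
    | zero => simpa using h0
    | succ j =>
        rw [Fin.cons_succ]
        exact mem_tailSet.mp (Finset.orderEmbOfFin_mem _ rfl j)
  have hmono : StrictMono (Fin.cons (0 : Fin (n + 1))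
      (fun j => Fin.succ ((tailSet S).orderEmbOfFin rfl j)) : Fin ((tailSet S).card + 1) → Fin (n+1)) := by
    intro a b hab
    induction b using Fin.cases with
    | zero => exact absurd hab (Fin.not_lt_zero a)
    | succ b =>
        induction a using Fin.cases with
        | zero =>
            rw [Fin.cons_zero, Fin.cons_succ]
            exact Fin.succ_pos _
        | succ a =>
            rw [Fin.cons_succ, Fin.cons_succ]
            exact Fin.succ_lt_succ_iff.mpr
              (((tailSet S).orderEmbOfFin rfl).strictMono (Fin.succ_lt_succ_iff.mp hab))
  have key := Finset.orderEmbOfFin_unique pf hmem hmono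
  have h2 : S.orderEmbOfFin rfl i = S.orderEmbOfFin pf j :=
    Finset.orderEmbOfFin_eq_orderEmbOfFin_iff.mpr hij
  rw [h2, ← congrFun key j]

lemma comb2 {n : ℕ} (S : Finset (Fin (n + 1))) (h0 : (0 : Fin (n + 1)) ∉ S)
    (T : Finset (Fin n)) (hT : tailSet S = T)
    (i : Fin S.card) (j : Fin T.card) (hij : (i : ℕ) = (j : ℕ)) :
    S.orderEmbOfFin rfl i = Fin.succ (T.orderEmbOfFin rfl j) := by
  subst hT
  have pf : S.card = (tailSet S).card := (tailSet_card_not_mem S h0).symm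
  have hmem : ∀ j, Fin.succ ((tailSet S).orderEmbOfFin rfl j) ∈ S := fun j =>
    mem_tailSet.mp (Finset.orderEmbOfFin_mem _ rfl j)
  have hmono : StrictMono (fun j => Fin.succ ((tailSet S).orderEmbOfFin rfl j)) :=
    fun a b hab => Fin.succ_lt_succ_iff.mpr (((tailSet S).orderEmbOfFin rfl).strictMono hab)
  have key := Finset.orderEmbOfFin_unique pf hmem hmono
  have h2 : S.orderEmbOfFin rfl i = S.orderEmbOfFin pf j :=
    Finset.orderEmbOfFin_eq_orderEmbOfFin_iff.mpr hij
  rw [h2, ← congrFun key j]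

lemma hcons_lemma {n : ℕ} (T : Finset (Fin n)) (f : Fin (n + 1) → H)
    (j : Fin (T.card + 1)) :
    (Fin.cons (f 0) (fun jj => f (Fin.succ ((T.orderIsoOfFin rfl jj : Fin n)))) :
        Fin (T.card + 1) → H) j
      = f ((Fin.cons (0 : Fin (n + 1)) (fun jj => Fin.succ (T.orderEmbOfFin rfl jj)) :
          Fin (T.card + 1) → Fin (n + 1)) j) := by
  induction j using Fin.cases with
  | zero => simp
  | succ jj => simp

end Comb

/-! ### `splitTP` on pure tensors -/

section SplitB

set_option maxHeartbeats 2000000 in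
lemma splitB : ∀ (n : ℕ) (S : Finset (Fin n)) (f : Fin n → H),
    splitTP k H n S (tp k H n f)
      = tp k H S.card (fun i => f (S.orderIsoOfFin rfl i))
        ⊗ₜ[k] tp k H Sᶜ.card (fun i => f (Sᶜ.orderIsoOfFin rfl i)) := by
  intro n
  induction n with
  | zero =>
      intro S f
      conv_lhs => rw [splitTP.eq_1]
      refine (absB0 (K := k) _ _).trans ?_
      exact congrArg₂ (· ⊗ₜ[k] ·) (cast_zero_tp k H _ f _) (cast_zero_tp k H _ f _)
  | succ n ih =>
      intro S f
      by_cases h0 : (0 : Fin (n + 1)) ∈ S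
      · conv_lhs => rw [splitTP.eq_2]; simp only [h0, ↓reduceDIte]
        refine (absB1 _ _ _ (f 0) (tp k H n fun i => f i.succ) _ _
          (ih (tailSet S) (fun i => f i.succ))).trans ?_
        refine congrArg₂ (· ⊗ₜ[k] ·) ?_ ?_
        · rw [← tp_cons]
          refine (castTP_tp k H _ _).trans ?_
          refine congrArg (tp k H S.card) (funext fun i => ?_)
          rw [Finset.coe_orderIsoOfFin_apply,
            comb1 S h0 (tailSet S) rfl i
              (Fin.cast (show S.card = (tailSet S).card + 1 by
                simpa using (tailSet_card_mem S h0).symm) i) (by simp),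
            hcons_lemma H (tailSet S) f]
        · refine (castTP_tp k H _ _).trans ?_
          refine congrArg (tp k H Sᶜ.card) (funext fun i => ?_)
          have h0c : (0 : Fin (n + 1)) ∉ Sᶜ := by simpa using h0
          refine congrArg f ?_
          rw [Finset.coe_orderIsoOfFin_apply, Finset.coe_orderIsoOfFin_apply,
            comb2 Sᶜ h0c ((tailSet S)ᶜ) (tailSet_compl S).symm i
              (Fin.cast (show Sᶜ.card = (tailSet S)ᶜ.card by
                rw [tailSet_compl]; exact (tailSet_card_not_mem Sᶜ h0c).symm) i) (by simp)]
      · conv_lhs => rw [splitTP.eq_2]; simp only [h0, ↓reduceDIte]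
        refine (absB2 _ _ _ (f 0) (tp k H n fun i => f i.succ) _ _
          (ih (tailSet S) (fun i => f i.succ))).trans ?_
        refine congrArg₂ (· ⊗ₜ[k] ·) ?_ ?_
        · refine (castTP_tp k H _ _).trans ?_
          refine congrArg (tp k H S.card) (funext fun i => ?_)
          refine congrArg f ?_
          rw [Finset.coe_orderIsoOfFin_apply, Finset.coe_orderIsoOfFin_apply,
            comb2 S h0 (tailSet S) rfl i
              (Fin.cast (tailSet_card_not_mem S h0).symm i) (by simp)]
        · rw [← tp_cons]
          refine (castTP_tp k H _ _).trans ?_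
          refine congrArg (tp k H Sᶜ.card) (funext fun i => ?_)
          have h0c : (0 : Fin (n + 1)) ∈ Sᶜ := by simpa using h0
          rw [Finset.coe_orderIsoOfFin_apply,
            comb1 Sᶜ h0c ((tailSet S)ᶜ) (tailSet_compl S).symm i
              (Fin.cast (show Sᶜ.card = (tailSet S)ᶜ.card + 1 by
                rw [tailSet_compl]; simpa using (tailSet_card_mem Sᶜ h0c).symm) i) (by simp),
            hcons_lemma H ((tailSet S)ᶜ) f]

lemma cast_iso {n p : ℕ} (S : Finset (Fin n)) (h : S.card = p) (f : Fin n → H) :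
    (castTP k H h) (tp k H S.card (fun i => f (S.orderIsoOfFin rfl i)))
      = tp k H p (fun i => f (S.orderIsoOfFin h i)) := by
  subst h; rfl

end SplitB

/-- For a cocommutative Hopf algebra `H`, the composite `Sh ∘ ρ` of the
diagonal with the shuffle map is the unshuffle coproduct: on a pure tensor
`h₁ ⊗ ⋯ ⊗ hₙ`, the `(p,q)`-component of `Shₙ(ρₙ(h₁⊗⋯⊗hₙ))` equals
`Σ_σ sign(σ) (h_{σ(1)}⊗⋯⊗h_{σ(p)}) ⊗ (h_{σ(p+1)}⊗⋯⊗h_{σ(n)})`, summed over all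
`(p,q)`-shuffles `σ`. -/
theorem sh_rho_eq_unshuffle
    (hcocomm : ∀ h : H, TensorProduct.comm k H H (Coalgebra.comul h) = Coalgebra.comul h)
    (n p q : ℕ) (hpq : p + q = n) (f : Fin n → H) :
    shTP k H (Coalgebra.counit) n p q hpq (rhoCM k H n (tp k H n f))
      = ∑ S : {S : Finset (Fin n) // S.card = p},
          shuffleSign S.1 •
            (tp k H p (fun i => f (S.1.orderIsoOfFin S.2 i))
              ⊗ₜ[k] tp k H q (fun i => f (S.1ᶜ.orderIsoOfFin (card_compl_eq hpq S.1 S.2) i))) := by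
  simp only [shTP, LinearMap.sum_apply, LinearMap.smul_apply]
  refine Finset.sum_congr rfl (fun S _ => ?_)
  refine congrArg (fun z => shuffleSign S.1 • z) ?_
  rw [TensorProduct.map_comp, LinearMap.comp_apply]
  simp only [rhoCM]
  have hA := LinearMap.congr_fun (lemA k H n S.1) (tp k H n f)
  simp only [LinearMap.comp_apply] at hA ⊢
  rw [hA, splitB k H n S.1 f, TensorProduct.map_tmul]
  rw [show ((castTP k H S.2).toLinearMap) (tp k H S.1.card fun i => f (S.1.orderIsoOfFin rfl i)) = tp k H p (fun i => f (S.1.orderIsoOfFin S.2 i)) from cast_iso k H S.1 S.2 f]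
  rw [show ((castTP k H (card_compl_eq hpq S.1 S.2)).toLinearMap) (tp k H S.1ᶜ.card fun i => f (S.1ᶜ.orderIsoOfFin rfl i)) = tp k H q (fun i => f (S.1ᶜ.orderIsoOfFin (card_compl_eq hpq S.1 S.2) i)) from cast_iso k H S.1ᶜ _ f]

end
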